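/- Let G and G' be digraphs on the same number n of vertices with η_G = η_{G'} as polynomials in (x,t↑,t↓,u↑,u↓). Then G and G' have the same number m of edges, and for every invader S the invaded digraphs S ≻ G and S ≻ G' have equal characteristic polynomials: det(x·I_{n+mc} − A_{S≻G}) = det(x·I_{n+mc} − A_{S≻G'}) identically in x. -/

import Mathlib

open Matrix

noncomputable section
open scoped Classical

namespace Stmt10

/-- The adjacency matrix of the digraph with edge set `E`, tail map `t` and head map `h`. -/
def adjOf {V E : Type*} [Fintype E] (t h : E → V) : Matrix V V ℂ :=
  Matrix.of fun u v => ((Finset.univ.filter fun e => t e = u ∧ h e = v).card : ℂ)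

/-- The out-degree matrix: diagonal matrix of row sums. -/
def doutOf {V : Type*} [Fintype V] [DecidableEq V] (A : Matrix V V ℂ) : Matrix V V ℂ :=
  Matrix.diagonal fun u => ∑ v, A u v

/-- The in-degree matrix: diagonal matrix of column sums. -/
def dinOf {V : Type*} [Fintype V] [DecidableEq V] (A : Matrix V V ℂ) : Matrix V V ℂ :=
  Matrix.diagonal fun v => ∑ u, A u v

/-- The generalized characteristic polynomial
`η_G(x,t↑,t↓,u↑,u↓) = det(x·I + t↑·D^out + t↓·D^in + u↑·A + u↓·Aᵀ)`. -/
def eta {V : Type*} [Fintype V] [DecidableEq V] (A : Matrix V V ℂ)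
    (x t₁ t₂ u₁ u₂ : ℂ) : ℂ :=
  (x • (1 : Matrix V V ℂ) + t₁ • doutOf A + t₂ • dinOf A + u₁ • A + u₂ • Aᵀ).det

/-- The adjacency matrix of the invaded digraph `S ≻ G`, where the invader `S` is given
by the data `a_tt, a_th, a_ht, a_hh`, row vectors `rt, rh`, column vectors `ct, ch`, and the
adjacency matrix `AC` of the subdigraph induced on the `c` invasive vertices. -/
def invadedAdj {V E : Type*} [Fintype V] [DecidableEq V] [Fintype E] [DecidableEq E]
    (t h : E → V) (c : ℕ) (att ath aht ahh : ℕ) (rt rh : Fin c → ℕ) (ct ch : Fin c → ℕ)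
    (AC : Matrix (Fin c) (Fin c) ℕ) :
    Matrix (V ⊕ E × Fin c) (V ⊕ E × Fin c) ℂ :=
  Matrix.of fun i j =>
    match i, j with
    | Sum.inl u, Sum.inl v =>
        ((att : ℂ) • doutOf (adjOf t h) + (ahh : ℂ) • dinOf (adjOf t h)
          + (ath : ℂ) • adjOf t h + (aht : ℂ) • (adjOf t h)ᵀ) u v
    | Sum.inl w, Sum.inr (e, j) =>
        (if w = t e then (rt j : ℂ) else 0) + (if w = h e then (rh j : ℂ) else 0)
    | Sum.inr (e, j), Sum.inl w =>
        (if w = t e then (ct j : ℂ) else 0) + (if w = h e then (ch j : ℂ) else 0)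
    | Sum.inr (e, j), Sum.inr (e', j') => if e = e' then (AC j j' : ℂ) else 0

end Stmt10

namespace StmtAux
open Polynomial Stmt10

lemma eval_charpoly' {m : Type*} [Fintype m] [DecidableEq m] (M : Matrix m m ℂ) (x : ℂ) :
    (M.charpoly).eval x = (x • (1 : Matrix m m ℂ) - M).det := by
  rw [Matrix.charpoly, ← Polynomial.coe_evalRingHom, RingHom.map_det]
  congr 1
  ext i j
  by_cases hij : i = j <;>
    simp [hij, Matrix.charmatrix_apply, Matrix.one_apply, Matrix.diagonal_apply]

def kron {E : Type*} [Fintype E] [DecidableEq E] {c : ℕ} (M : Matrix (Fin c) (Fin c) ℂ) :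
    Matrix (E × Fin c) (E × Fin c) ℂ :=
  Matrix.of fun p q => if p.1 = q.1 then M p.2 q.2 else 0

section kron
variable {E : Type*} [Fintype E] [DecidableEq E] {c : ℕ}

lemma kron_mul (M N : Matrix (Fin c) (Fin c) ℂ) :
    (kron (E := E) M) * kron N = kron (M * N) := by
  ext ⟨e, j⟩ ⟨e', j'⟩
  simp only [kron, Matrix.mul_apply, Matrix.of_apply]
  rw [Fintype.sum_prod_type]
  by_cases he : e = e'
  · subst he
    simp [Finset.sum_ite_eq', Finset.mul_sum]
  · simp only [he, if_false]
    apply Finset.sum_eq_zero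
    intro f _
    apply Finset.sum_eq_zero
    intro k _
    by_cases hf : e = f <;> by_cases hf' : f = e' <;> simp_all

lemma kron_one : (kron (E := E) (1 : Matrix (Fin c) (Fin c) ℂ)) = 1 := by
  ext ⟨e, j⟩ ⟨e', j'⟩
  simp [kron, Matrix.one_apply, Prod.ext_iff, and_comm]
  by_cases he : e = e' <;> by_cases hj : j = j' <;> simp_all

lemma smul_one_sub_kron (x : ℂ) (M : Matrix (Fin c) (Fin c) ℂ) :
    x • (1 : Matrix (E × Fin c) (E × Fin c) ℂ) - kron M = kron (x • 1 - M) := by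
  ext ⟨e, j⟩ ⟨e', j'⟩
  simp [kron, Matrix.one_apply, Prod.ext_iff]
  by_cases he : e = e' <;> by_cases hj : j = j' <;> simp_all

lemma det_kron (M : Matrix (Fin c) (Fin c) ℂ) :
    (kron (E := E) M).det = M.det ^ Fintype.card E := by
  have : kron (E := E) M =
      (Matrix.blockDiagonal fun _ : E => M).submatrix (Equiv.prodComm E (Fin c))
        (Equiv.prodComm E (Fin c)) := by
    ext ⟨e, j⟩ ⟨e', j'⟩
    simp [kron, Matrix.blockDiagonal_apply, eq_comm]
  rw [this, Matrix.det_submatrix_equiv_self, Matrix.det_blockDiagonal, Finset.prod_const,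
    Finset.card_univ]

lemma kron_inv (M : Matrix (Fin c) (Fin c) ℂ) (h : IsUnit M.det) :
    (kron (E := E) M)⁻¹ = kron M⁻¹ := by
  apply Matrix.inv_eq_right_inv
  rw [kron_mul, Matrix.mul_nonsing_inv _ h, kron_one]

end kron

def ind {V : Type*} (a b : V) : ℂ := if a = b then 1 else 0

lemma sum_ind_self {V : Type*} [Fintype V] (b : V) : ∑ x : V, ind x b = 1 := by
  rw [Finset.sum_eq_single_of_mem b (Finset.mem_univ b)]
  · simp [ind]
  · intro x _ hx
    simp [ind, hx]

lemma ind_comm {V : Type*} (a b : V) : ind a b = ind b a := by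
  unfold ind
  by_cases hh : a = b
  · simp [hh]
  · simp [hh, Ne.symm hh]

section graphs

variable {V E : Type*} [Fintype V] [DecidableEq V] [Fintype E] [DecidableEq E]
  (t h : E → V)

omit [Fintype V] [DecidableEq E] in
lemma card_eq_sum_ind (w w' : V) (f g : E → V) :
    ((Finset.univ.filter fun e => f e = w ∧ g e = w').card : ℂ) =
      ∑ e, ind w (f e) * ind w' (g e) := by
  rw [← Finset.sum_boole]
  apply Finset.sum_congr rfl
  intro e _
  rw [ind_comm w, ind_comm w']
  simp only [ind]
  by_cases h1 : f e = w <;> by_cases h2 : g e = w' <;> simp [h1, h2]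

omit [Fintype V] [DecidableEq E] in
lemma sum_ind_th (w w' : V) : ∑ e, ind w (t e) * ind w' (h e) = adjOf t h w w' := by
  rw [← card_eq_sum_ind]
  simp only [adjOf, Matrix.of_apply]
  norm_num
  congr!

omit [Fintype V] [DecidableEq E] in
lemma sum_ind_ht (w w' : V) : ∑ e, ind w (h e) * ind w' (t e) = (adjOf t h)ᵀ w w' := by
  rw [Matrix.transpose_apply, ← sum_ind_th t h w' w]
  exact Finset.sum_congr rfl fun e _ => mul_comm _ _

omit [DecidableEq E] in
lemma sum_ind_tt (w w' : V) : ∑ e, ind w (t e) * ind w' (t e) = doutOf (adjOf t h) w w' := by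
  simp only [doutOf, Matrix.diagonal_apply]
  by_cases hww : w = w'
  · subst hww
    have : ∀ v, adjOf t h w v = ∑ e, ind w (t e) * ind v (h e) := fun v =>
      (sum_ind_th t h w v).symm
    simp only [this]
    rw [Finset.sum_comm, if_pos trivial]
    apply Finset.sum_congr rfl
    intro e _
    rw [← Finset.mul_sum]
    rw [sum_ind_self, mul_one, ind]
    by_cases ht : w = t e <;> simp [ht]
  · rw [if_neg hww]
    apply Finset.sum_eq_zero
    intro e _
    simp only [ind]
    by_cases h1 : w = t e <;> by_cases h2 : w' = t e <;> simp_all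

omit [DecidableEq E] in
lemma sum_ind_hh (w w' : V) : ∑ e, ind w (h e) * ind w' (h e) = dinOf (adjOf t h) w w' := by
  simp only [dinOf, Matrix.diagonal_apply]
  by_cases hww : w = w'
  · subst hww
    have : ∀ u, adjOf t h u w = ∑ e, ind u (t e) * ind w (h e) := fun u =>
      (sum_ind_th t h u w).symm
    simp only [this]
    rw [Finset.sum_comm, if_pos trivial]
    apply Finset.sum_congr rfl
    intro e _
    rw [Finset.sum_congr rfl (fun u _ => mul_comm _ _), ← Finset.mul_sum]
    rw [sum_ind_self, mul_one]
    by_cases ht : w = h e <;> simp [ind, ht]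
  · rw [if_neg hww]
    apply Finset.sum_eq_zero
    intro e _
    simp only [ind]
    by_cases h1 : w = h e <;> by_cases h2 : w' = h e <;> simp_all

end graphs

section invader
variable {V E : Type*} [Fintype V] [DecidableEq V] [Fintype E] [DecidableEq E]
  (t h : E → V)

/-- The `V × (E × Fin c)` block of the invaded adjacency matrix. -/
def rowM (c : ℕ) (rt rh : Fin c → ℕ) : Matrix V (E × Fin c) ℂ :=
  Matrix.of fun w p =>
    (if w = t p.1 then (rt p.2 : ℂ) else 0) + (if w = h p.1 then (rh p.2 : ℂ) else 0)

/-- The `(E × Fin c) × V` block of the invaded adjacency matrix. -/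
def colM (c : ℕ) (ct ch : Fin c → ℕ) : Matrix (E × Fin c) V ℂ :=
  Matrix.of fun p w =>
    (if w = t p.1 then (ct p.2 : ℂ) else 0) + (if w = h p.1 then (ch p.2 : ℂ) else 0)

def Bmat (c : ℕ) (att ath aht ahh : ℕ) : Matrix V V ℂ :=
  (att : ℂ) • doutOf (adjOf t h) + (ahh : ℂ) • dinOf (adjOf t h)
    + (ath : ℂ) • adjOf t h + (aht : ℂ) • (adjOf t h)ᵀ

def ACC (c : ℕ) (AC : Matrix (Fin c) (Fin c) ℕ) : Matrix (Fin c) (Fin c) ℂ :=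
  Matrix.of fun j j' => (AC j j' : ℂ)

def bil {c : ℕ} (r : Fin c → ℕ) (N : Matrix (Fin c) (Fin c) ℂ) (s : Fin c → ℕ) : ℂ :=
  ∑ j, ∑ j', (r j : ℂ) * N j j' * (s j' : ℂ)

omit [Fintype V] in
lemma rowM_apply (c : ℕ) (rt rh : Fin c → ℕ) (w : V) (e : E) (j : Fin c) :
    rowM t h c rt rh w (e, j) = ind w (t e) * (rt j : ℂ) + ind w (h e) * (rh j : ℂ) := by
  simp only [rowM, Matrix.of_apply, ind]
  by_cases h1 : w = t e <;> by_cases h2 : w = h e <;> simp [h1, h2]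

omit [Fintype V] in
lemma colM_apply (c : ℕ) (ct ch : Fin c → ℕ) (w : V) (e : E) (j : Fin c) :
    colM t h c ct ch (e, j) w = ind w (t e) * (ct j : ℂ) + ind w (h e) * (ch j : ℂ) := by
  simp only [colM, Matrix.of_apply, ind]
  by_cases h1 : w = t e <;> by_cases h2 : w = h e <;> simp [h1, h2]

lemma invaded_eq_fromBlocks (c : ℕ) (att ath aht ahh : ℕ) (rt rh ct ch : Fin c → ℕ)
    (AC : Matrix (Fin c) (Fin c) ℕ) :
    invadedAdj t h c att ath aht ahh rt rh ct ch AC =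
      Matrix.fromBlocks (Bmat t h c att ath aht ahh) (rowM t h c rt rh) (colM t h c ct ch)
        (kron (ACC c AC)) := by
  ext i j
  rcases i with u | ⟨e, k⟩ <;> rcases j with v | ⟨e', k'⟩ <;> rfl

lemma rowM_mul_kron (c : ℕ) (rt rh : Fin c → ℕ) (N : Matrix (Fin c) (Fin c) ℂ) :
    rowM t h c rt rh * kron (E := E) N =
      Matrix.of fun w p => ∑ j, rowM t h c rt rh w (p.1, j) * N j p.2 := by
  ext w ⟨e, j'⟩
  simp only [Matrix.mul_apply, kron, Matrix.of_apply]
  rw [Fintype.sum_prod_type]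
  rw [Finset.sum_eq_single_of_mem e (Finset.mem_univ e)]
  · simp
  · intro f _ hf
    apply Finset.sum_eq_zero
    intro k _
    simp [hf]

lemma mul_kron_mul (c : ℕ) (rt rh ct ch : Fin c → ℕ) (N : Matrix (Fin c) (Fin c) ℂ) :
    rowM t h c rt rh * kron (E := E) N * colM t h c ct ch =
      bil rt N ct • doutOf (adjOf t h) + bil rh N ch • dinOf (adjOf t h)
        + bil rt N ch • adjOf t h + bil rh N ct • (adjOf t h)ᵀ := by
  rw [rowM_mul_kron]
  ext w w'
  rw [Matrix.mul_apply, Fintype.sum_prod_type]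
  have step1 : ∀ e : E, (∑ j' : Fin c, (∑ j : Fin c, rowM t h c rt rh w (e, j) * N j j')
        * colM t h c ct ch (e, j') w')
      = ind w (t e) * ind w' (t e) * bil rt N ct + ind w (h e) * ind w' (h e) * bil rh N ch
        + ind w (t e) * ind w' (h e) * bil rt N ch + ind w (h e) * ind w' (t e) * bil rh N ct := by
    intro e
    simp only [rowM_apply, colM_apply, bil, Finset.sum_mul, Finset.mul_sum]
    rw [Finset.sum_comm]
    simp only [← Finset.sum_add_distrib]
    apply Finset.sum_congr rfl
    intro j _
    apply Finset.sum_congr rfl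
    intro j' _
    ring
  simp only [Matrix.of_apply]
  rw [Finset.sum_congr rfl fun e _ => step1 e]
  simp only [Finset.sum_add_distrib, ← Finset.sum_mul]
  rw [sum_ind_tt, sum_ind_hh, sum_ind_th, sum_ind_ht]
  simp only [Matrix.add_apply, Matrix.smul_apply, smul_eq_mul]
  ring

end invader


section key
variable {V E : Type*} [Fintype V] [DecidableEq V] [Fintype E] [DecidableEq E]
  (t h : E → V)

lemma key (c : ℕ) (att ath aht ahh : ℕ) (rt rh ct ch : Fin c → ℕ)
    (AC : Matrix (Fin c) (Fin c) ℕ) (x : ℂ)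
    (hx : (x • (1 : Matrix (Fin c) (Fin c) ℂ) - ACC c AC).det ≠ 0) :
    (x • (1 : Matrix (V ⊕ E × Fin c) (V ⊕ E × Fin c) ℂ)
        - invadedAdj t h c att ath aht ahh rt rh ct ch AC).det
      = (x • (1 : Matrix (Fin c) (Fin c) ℂ) - ACC c AC).det ^ Fintype.card E
        * eta (adjOf t h) x
            (-(att + bil rt (x • 1 - ACC c AC)⁻¹ ct))
            (-(ahh + bil rh (x • 1 - ACC c AC)⁻¹ ch))
            (-(ath + bil rt (x • 1 - ACC c AC)⁻¹ ch))
            (-(aht + bil rh (x • 1 - ACC c AC)⁻¹ ct)) := by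
  set M := x • (1 : Matrix (Fin c) (Fin c) ℂ) - ACC c AC with hM
  set N := M⁻¹ with hN
  have hone : (x • (1 : Matrix (V ⊕ E × Fin c) (V ⊕ E × Fin c) ℂ))
      = Matrix.fromBlocks (x • 1) 0 0 (x • 1) := by
    rw [← Matrix.fromBlocks_one, Matrix.fromBlocks_smul, smul_zero, smul_zero]
  have hdecomp : x • (1 : Matrix (V ⊕ E × Fin c) (V ⊕ E × Fin c) ℂ)
      - invadedAdj t h c att ath aht ahh rt rh ct ch AC
      = Matrix.fromBlocks (x • 1 - Bmat t h c att ath aht ahh) (-(rowM t h c rt rh))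
          (-(colM t h c ct ch)) (kron M) := by
    rw [invaded_eq_fromBlocks, hone, sub_eq_add_neg, Matrix.fromBlocks_neg,
      Matrix.fromBlocks_add]
    have h4 : x • (1 : Matrix (E × Fin c) (E × Fin c) ℂ) + -kron (ACC c AC) = kron M := by
      rw [← sub_eq_add_neg, smul_one_sub_kron, hM]
    rw [zero_add, zero_add, h4, ← sub_eq_add_neg]
  have hdetM : IsUnit (kron (E := E) M).det := by
    rw [det_kron]
    exact isUnit_iff_ne_zero.mpr (pow_ne_zero _ hx)
  haveI : Invertible (kron (E := E) M) := Matrix.invertibleOfIsUnitDet _ hdetM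
  rw [hdecomp, Matrix.det_fromBlocks₂₂, Matrix.invOf_eq_nonsing_inv,
    kron_inv M (isUnit_iff_ne_zero.mpr hx), det_kron]
  congr 1
  have hschur : (x • 1 - Bmat t h c att ath aht ahh)
      - (-(rowM t h c rt rh)) * kron (E := E) N * (-(colM t h c ct ch))
      = x • 1 + (-((att : ℂ) + bil rt N ct)) • doutOf (adjOf t h)
          + (-((ahh : ℂ) + bil rh N ch)) • dinOf (adjOf t h)
          + (-((ath : ℂ) + bil rt N ch)) • adjOf t h
          + (-((aht : ℂ) + bil rh N ct)) • (adjOf t h)ᵀ := by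
    rw [Matrix.neg_mul, Matrix.neg_mul, Matrix.mul_neg, neg_neg, mul_kron_mul, Bmat]
    module
  rw [hschur]
  rfl

omit [DecidableEq E] in
lemma sum_card : ∑ v : V, ∑ u : V, adjOf t h v u = (Fintype.card E : ℂ) := by
  have hadj : ∀ v u : V, adjOf t h v u = ∑ e, ind v (t e) * ind u (h e) := fun v u =>
    (sum_ind_th t h v u).symm
  simp only [hadj]
  have h1 : ∀ v : V, ∑ u : V, ∑ e : E, ind v (t e) * ind u (h e) = ∑ e, ind v (t e) := by
    intro v
    rw [Finset.sum_comm]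
    apply Finset.sum_congr rfl
    intro e _
    rw [← Finset.mul_sum, sum_ind_self, mul_one]
  simp only [h1]
  rw [Finset.sum_comm]
  have h2 : ∀ e : E, ∑ v : V, ind v (t e) = 1 := fun e => sum_ind_self (t e)
  simp only [h2, Finset.sum_const, Finset.card_univ, nsmul_eq_mul, mul_one]

omit [DecidableEq E] in
lemma eta_prod (x : ℂ) :
    eta (adjOf t h) x 1 0 0 0 = ∏ v : V, (x + ∑ u, adjOf t h v u) := by
  simp only [Stmt10.eta, zero_smul, add_zero, one_smul, doutOf]
  rw [Matrix.smul_one_eq_diagonal, Matrix.diagonal_add, Matrix.det_diagonal]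

end key

end StmtAux

open Stmt10

/-- Digraphs with equal generalized characteristic polynomials have the
same number of edges and cospectral invaded digraphs for every invader `S`. -/
theorem stmt_10 {n : ℕ} {E E' : Type*} [Fintype E] [DecidableEq E] [Fintype E'] [DecidableEq E']
    (t h : E → Fin n) (t' h' : E' → Fin n)
    (heta : ∀ x t₁ t₂ u₁ u₂ : ℂ,
      eta (adjOf t h) x t₁ t₂ u₁ u₂ = eta (adjOf t' h') x t₁ t₂ u₁ u₂) :
    Fintype.card E = Fintype.card E' ∧
      ∀ (c : ℕ) (att ath aht ahh : ℕ) (rt rh : Fin c → ℕ) (ct ch : Fin c → ℕ)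
        (AC : Matrix (Fin c) (Fin c) ℕ) (x : ℂ),
        (x • (1 : Matrix (Fin n ⊕ E × Fin c) (Fin n ⊕ E × Fin c) ℂ)
          - invadedAdj t h c att ath aht ahh rt rh ct ch AC).det =
        (x • (1 : Matrix (Fin n ⊕ E' × Fin c) (Fin n ⊕ E' × Fin c) ℂ)
          - invadedAdj t' h' c att ath aht ahh rt rh ct ch AC).det := by
  
  have hcard : Fintype.card E = Fintype.card E' := by
    have hP : (∏ v : Fin n, (Polynomial.X + Polynomial.C (∑ u, adjOf t h v u)))
        = ∏ v : Fin n, (Polynomial.X + Polynomial.C (∑ u, adjOf t' h' v u)) := by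
      apply Polynomial.funext
      intro y
      have e1 := StmtAux.eta_prod t h y
      have e2 := StmtAux.eta_prod t' h' y
      simp only [Polynomial.eval_prod, Polynomial.eval_add, Polynomial.eval_X,
        Polynomial.eval_C]
      rw [← e1, ← e2, heta]
    have h2 := congrArg Polynomial.nextCoeff hP
    rw [Polynomial.Monic.nextCoeff_prod _ _ (fun i _ => Polynomial.monic_X_add_C _),
      Polynomial.Monic.nextCoeff_prod _ _ (fun i _ => Polynomial.monic_X_add_C _)] at h2
    simp only [Polynomial.nextCoeff_X_add_C] at h2
    rw [StmtAux.sum_card, StmtAux.sum_card] at h2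
    exact_mod_cast h2
  refine ⟨hcard, ?_⟩
  intro c att ath aht ahh rt rh ct ch AC x
  have hrm : (StmtAux.ACC c AC).charpoly.Monic := Matrix.charpoly_monic _
  have hpq : (invadedAdj t h c att ath aht ahh rt rh ct ch AC).charpoly
        * (StmtAux.ACC c AC).charpoly
      = (invadedAdj t' h' c att ath aht ahh rt rh ct ch AC).charpoly
        * (StmtAux.ACC c AC).charpoly := by
    apply Polynomial.funext
    intro y
    simp only [Polynomial.eval_mul]
    by_cases hy : Polynomial.eval y (StmtAux.ACC c AC).charpoly = 0
    · rw [hy, mul_zero, mul_zero]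
    · have hy' : (y • (1 : Matrix (Fin c) (Fin c) ℂ) - StmtAux.ACC c AC).det ≠ 0 := by
        rw [← StmtAux.eval_charpoly']; exact hy
      congr 1
      rw [StmtAux.eval_charpoly', StmtAux.eval_charpoly',
        StmtAux.key t h c att ath aht ahh rt rh ct ch AC y hy',
        StmtAux.key t' h' c att ath aht ahh rt rh ct ch AC y hy', hcard, heta]
  have hpp := mul_right_cancel₀ hrm.ne_zero hpq
  rw [← StmtAux.eval_charpoly', ← StmtAux.eval_charpoly', hpp]
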